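/- Let $k$ be a field, let $d \geq 1$, and let $\varphi$ be a homogeneous polynomial of degree $d$ in $N+1$ variables over $k$ that is diagonal-full (for each $i \in \{0,\dots,N\}$, the coefficient of the monomial $x_i^d$ in $\varphi$ is nonzero) and anisotropic over $k$. Let $s = (s_0, \dots, s_N) \in k[t]^{N+1}$ be a nonzero vector of polynomials. Then $\deg(\varphi(s_0,\dots,s_N)) = d \cdot \max_{i=0,\dots,N} \deg(s_i)$; in particular $\varphi(s_0,\dots,s_N) \neq 0$. -/

import Mathlib

open Polynomial Finset in
private lemma coeff_prod_varying {k : Type} [CommSemiring k] {ι : Type} (t : Finset ι)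
    (f : ι → Polynomial k) (n : ι → ℕ) (h : ∀ i ∈ t, (f i).natDegree ≤ n i) :
    (∏ i ∈ t, f i).coeff (∑ i ∈ t, n i) = ∏ i ∈ t, (f i).coeff (n i) := by
  classical
  induction t using Finset.cons_induction with
  | empty => simp
  | cons a t ha ih =>
    rw [Finset.prod_cons, Finset.sum_cons,
      Polynomial.coeff_mul_add_eq_of_natDegree_le (h a (Finset.mem_cons_self a t))
        ((Polynomial.natDegree_prod_le t f).trans
          (Finset.sum_le_sum fun i hi => h i (Finset.mem_cons_of_mem hi))),
      ih (fun i hi => h i (Finset.mem_cons_of_mem hi)), Finset.prod_cons]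

/-- **Lemma (degree of values on polynomial vectors).** Let `φ` be a diagonal-full,
anisotropic degree-`d ≥ 1` form in `N+1` variables over a field `k`, and let
`s ∈ k[t]^{N+1}` be a nonzero vector of polynomials. Then
`deg(φ(s)) = d · max_i deg(s_i)`; in particular `φ(s) ≠ 0`. -/
theorem degree_eval_poly_vector (k : Type) [Field k] (d N : ℕ) (hd : 1 ≤ d)
    (φ : MvPolynomial (Fin (N + 1)) k) (hφ : φ.IsHomogeneous d)
    (hdiag : ∀ i : Fin (N + 1), MvPolynomial.coeff (Finsupp.single i d) φ ≠ 0)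
    (haniso : ¬ ∃ v : Fin (N + 1) → k, v ≠ 0 ∧ MvPolynomial.eval v φ = 0)
    (s : Fin (N + 1) → Polynomial k) (hs : s ≠ 0) :
    MvPolynomial.eval s (MvPolynomial.map Polynomial.C φ) ≠ 0 ∧
    (MvPolynomial.eval s (MvPolynomial.map Polynomial.C φ)).natDegree =
      d * Finset.univ.sup (fun i => (s i).natDegree) := by
  classical
  set e : ℕ := Finset.univ.sup (fun i => (s i).natDegree) with he
  set v : Fin (N + 1) → k := fun i => (s i).coeff e with hv
  have hle : ∀ i, (s i).natDegree ≤ e := fun i =>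
    Finset.le_sup (f := fun i => (s i).natDegree) (Finset.mem_univ i)
  -- v ≠ 0
  have hvne : v ≠ 0 := by
    rcases Nat.eq_zero_or_pos e with he0 | hpos
    · obtain ⟨j, hj⟩ : ∃ j, s j ≠ 0 := by
        by_contra h
        push_neg at h
        exact hs (funext h)
      intro h0
      have : (s j).coeff e = 0 := congrFun h0 j
      rw [he0] at this
      have hdeg : (s j).natDegree = 0 := Nat.le_antisymm (he0 ▸ hle j) (Nat.zero_le _)
      have : s j = 0 := by
        rw [Polynomial.eq_C_of_natDegree_eq_zero hdeg, this, map_zero]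
      exact hj this
    · obtain ⟨j, hj⟩ := Finset.exists_mem_eq_sup Finset.univ
        (Finset.univ_nonempty) (fun i => (s i).natDegree)
      intro h0
      have hj' : (s j).natDegree = e := hj.2.symm
      have hsjne : s j ≠ 0 := by
        intro h
        rw [h] at hj'
        simp at hj'
        omega
      have : (s j).coeff e = 0 := congrFun h0 j
      rw [← hj'] at this
      exact hsjne (Polynomial.leadingCoeff_eq_zero.mp this)
  -- key: coeff (d*e) of eval = eval v φ
  set P := MvPolynomial.eval s (MvPolynomial.map Polynomial.C φ) with hP
  have hPeq : P = ∑ m ∈ φ.support, Polynomial.C (MvPolynomial.coeff m φ) *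
      ∏ i, (s i) ^ (m i) := by
    rw [hP, MvPolynomial.eval_map, MvPolynomial.eval₂_eq]
    refine Finset.sum_congr rfl fun m _ => ?_
    congr 1
    exact Finset.prod_subset (Finset.subset_univ _)
      (fun i _ hi => by rw [Finsupp.notMem_support_iff.mp hi, pow_zero])
  have hcoeff : P.coeff (d * e) = MvPolynomial.eval v φ := by
    rw [hPeq, Polynomial.finset_sum_coeff, MvPolynomial.eval_eq']
    refine Finset.sum_congr rfl fun m hm => ?_
    have hmd : ∑ i, m i = d := by
      have h1 := hφ (MvPolynomial.mem_support_iff.mp hm)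
      rw [Pi.one_def, ← Finsupp.degree_eq_weight_one, Finsupp.degree] at h1
      rw [← h1]
      exact (Finset.sum_subset (Finset.subset_univ _)
        (fun i _ hi => Finsupp.notMem_support_iff.mp hi)).symm
    have hde : d * e = ∑ i, m i * e := by
      rw [← Finset.sum_mul, hmd]
    rw [Polynomial.coeff_C_mul, hde,
      coeff_prod_varying Finset.univ (fun i => (s i) ^ (m i)) (fun i => m i * e)
        (fun i _ => Polynomial.natDegree_pow_le.trans
          (Nat.mul_le_mul_left (m i) (hle i)))]
    congr 1
    exact Finset.prod_congr rfl fun i _ =>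
      Polynomial.coeff_pow_of_natDegree_le (hle i)
  have hevne : MvPolynomial.eval v φ ≠ 0 := by
    intro h
    exact haniso ⟨v, hvne, h⟩
  have hcne : P.coeff (d * e) ≠ 0 := by rw [hcoeff]; exact hevne
  have hPne : P ≠ 0 := fun h => hcne (by simp [h])
  have hge : d * e ≤ P.natDegree := Polynomial.le_natDegree_of_ne_zero hcne
  have hle' : P.natDegree ≤ d * e := by
    rw [hPeq]
    refine (Polynomial.natDegree_sum_le _ _).trans ?_
    rw [Finset.fold_max_le]
    refine ⟨Nat.zero_le _, fun m hm => ?_⟩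
    refine (Polynomial.natDegree_mul_le).trans ?_
    have hmd : ∑ i, m i = d := by
      have h1 := hφ (MvPolynomial.mem_support_iff.mp hm)
      rw [Pi.one_def, ← Finsupp.degree_eq_weight_one, Finsupp.degree] at h1
      rw [← h1]
      exact (Finset.sum_subset (Finset.subset_univ _)
        (fun i _ hi => Finsupp.notMem_support_iff.mp hi)).symm
    have : (∏ i, (s i) ^ (m i)).natDegree ≤ ∑ i, m i * e :=
      (Polynomial.natDegree_prod_le _ _).trans
        (Finset.sum_le_sum fun i _ => Polynomial.natDegree_pow_le.trans
          (Nat.mul_le_mul_left (m i) (hle i)))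
    simp only [Polynomial.natDegree_C, zero_add]
    calc (∏ i, (s i) ^ (m i)).natDegree ≤ ∑ i, m i * e := this
      _ = d * e := by rw [← Finset.sum_mul, hmd]
  exact ⟨hPne, le_antisymm hle' hge⟩
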